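/- Let p, α, β > 2 be real numbers, q = min{p, α, β}, λ, λ₀, λ₁ > 0, and let δ be a real number with 0 < δ < (q−2)/q. Let v : [0,1] → ℝ be continuously differentiable and w : [0,1] → ℝ be continuous, and define E = (1/2)‖w‖² + (1/2)‖v‖₁² − (1/p)∫₀¹|v|^p dx − (1/α)|v(0)|^α − (1/β)|v(1)|^β, ψ = ∫₀¹ v(x)w(x) dx + (λ/2)‖v‖² + (λ₀/2)|v(0)|² + (λ₁/2)|v(1)|², 𝓛 = E + δψ, and I = ‖v‖₁² − ∫₀¹|v|^p dx − |v(0)|^α − |v(1)|^β. If I ≥ 0, then β₁·E ≤ 𝓛 ≤ β₂·E, where β₁ = min{1−δ, (q−2)/q − δ} > 0 and β₂ = 1 + δ + (2q/(q−2))·( 1/2 + δ·((1+λ)/2 + λ₀ + λ₁) ). -/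

import Mathlib

open intervalIntegral


open intervalIntegral

lemma aux_cs (f g : ℝ → ℝ) (hf : Continuous f) (hg : Continuous g) :
    |∫ x in (0:ℝ)..1, f x * g x| ≤
      (1/2) * ((∫ x in (0:ℝ)..1, f x ^ 2) + ∫ x in (0:ℝ)..1, g x ^ 2) := by
  have hfg : IntervalIntegrable (fun x => f x * g x) MeasureTheory.volume 0 1 :=
    (hf.mul hg).intervalIntegrable _ _
  have hf2 : IntervalIntegrable (fun x => f x ^ 2) MeasureTheory.volume 0 1 :=
    (hf.pow 2).intervalIntegrable _ _
  have hg2 : IntervalIntegrable (fun x => g x ^ 2) MeasureTheory.volume 0 1 :=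
    (hg.pow 2).intervalIntegrable _ _
  have e1 : ∫ x in (0:ℝ)..1, (f x + g x) ^ 2 =
      (∫ x in (0:ℝ)..1, f x ^ 2) + (∫ x in (0:ℝ)..1, 2 * (f x * g x) + g x ^ 2) := by
    rw [← intervalIntegral.integral_add hf2 ((hfg.const_mul 2).add hg2)]
    congr 1; funext x; ring
  have e1' : ∫ x in (0:ℝ)..1, 2 * (f x * g x) + g x ^ 2 =
      2 * (∫ x in (0:ℝ)..1, f x * g x) + ∫ x in (0:ℝ)..1, g x ^ 2 := by
    rw [intervalIntegral.integral_add (hfg.const_mul 2) hg2,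
      intervalIntegral.integral_const_mul]
  have e2 : ∫ x in (0:ℝ)..1, (f x - g x) ^ 2 =
      (∫ x in (0:ℝ)..1, f x ^ 2) + (∫ x in (0:ℝ)..1, (-2) * (f x * g x) + g x ^ 2) := by
    rw [← intervalIntegral.integral_add hf2 ((hfg.const_mul (-2)).add hg2)]
    congr 1; funext x; ring
  have e2' : ∫ x in (0:ℝ)..1, (-2) * (f x * g x) + g x ^ 2 =
      (-2) * (∫ x in (0:ℝ)..1, f x * g x) + ∫ x in (0:ℝ)..1, g x ^ 2 := by
    rw [intervalIntegral.integral_add (hfg.const_mul (-2)) hg2,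
      intervalIntegral.integral_const_mul]
  have p1 : (0:ℝ) ≤ ∫ x in (0:ℝ)..1, (f x + g x) ^ 2 :=
    intervalIntegral.integral_nonneg (by norm_num) (fun x _ => sq_nonneg _)
  have p2 : (0:ℝ) ≤ ∫ x in (0:ℝ)..1, (f x - g x) ^ 2 :=
    intervalIntegral.integral_nonneg (by norm_num) (fun x _ => sq_nonneg _)
  rw [e1', ] at e1
  rw [e2'] at e2
  rw [abs_le]; constructor <;> nlinarith [e1, e2]

lemma aux_trace (v : ℝ → ℝ) (hv : ContDiff ℝ 1 v) (t : ℝ) (ht0 : 0 ≤ t) (ht1 : t ≤ 1) :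
    v t ^ 2 ≤ 2 * ((∫ x in (0:ℝ)..1, v x ^ 2) + ∫ x in (0:ℝ)..1, deriv v x ^ 2) := by
  have hc : Continuous v := hv.continuous
  have hd : Continuous (deriv v) := hv.continuous_deriv le_rfl
  set g : ℝ → ℝ := fun x => 2 * v x * deriv v x with hg
  have hgc : Continuous g := (continuous_const.mul hc).mul hd
  have hderiv : ∀ x, HasDerivAt (fun y => v y ^ 2) (g x) x := by
    intro x
    have h := ((hv.differentiable one_ne_zero) x).hasDerivAt
    have h2 := h.fun_pow 2
    simpa [hg, mul_comm, mul_assoc, mul_left_comm] using h2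
  obtain ⟨x₀, hx₀mem, hx₀min⟩ := isCompact_Icc.exists_isMinOn
    (Set.nonempty_Icc.mpr (by norm_num : (0:ℝ) ≤ 1)) ((hc.pow 2).continuousOn)
  have hVmin : v x₀ ^ 2 ≤ ∫ x in (0:ℝ)..1, v x ^ 2 := by
    have h := intervalIntegral.integral_mono_on (by norm_num : (0:ℝ) ≤ 1)
      (intervalIntegrable_const : IntervalIntegrable (fun _ => v x₀ ^ 2) MeasureTheory.volume 0 1) ((hc.pow 2).intervalIntegrable _ _)
      (fun x hx => hx₀min hx)
    simpa using h
  have hftc : ∫ x in x₀..t, g x = v t ^ 2 - v x₀ ^ 2 :=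
    intervalIntegral.integral_eq_sub_of_hasDerivAt (fun x _ => hderiv x)
      (hgc.intervalIntegrable _ _)
  have habs1 : |∫ x in x₀..t, g x| ≤ |∫ x in x₀..t, (|g x|)| := by
    simpa using intervalIntegral.norm_integral_le_abs_integral_norm (f := g) (a := x₀) (b := t) (μ := MeasureTheory.volume)
  have hsub : Set.uIoc x₀ t ⊆ Set.uIoc (0:ℝ) 1 := by
    rw [Set.uIoc_of_le (by norm_num : (0:ℝ) ≤ 1), Set.uIoc]
    exact Set.Ioc_subset_Ioc (le_min hx₀mem.1 ht0) (max_le hx₀mem.2 ht1)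
  have habs2 : |∫ x in x₀..t, (|g x|)| ≤ |∫ x in (0:ℝ)..1, (|g x|)| :=
    intervalIntegral.abs_integral_mono_interval hsub
      (MeasureTheory.ae_of_all _ (fun x => abs_nonneg _))
      (hgc.abs.intervalIntegrable _ _)
  have habs3 : |∫ x in (0:ℝ)..1, (|g x|)| = ∫ x in (0:ℝ)..1, |g x| :=
    abs_of_nonneg (intervalIntegral.integral_nonneg (by norm_num) (fun x _ => abs_nonneg _))
  have hptw : ∫ x in (0:ℝ)..1, |g x| ≤
      (∫ x in (0:ℝ)..1, v x ^ 2) + ∫ x in (0:ℝ)..1, deriv v x ^ 2 := by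
    have h := intervalIntegral.integral_mono_on (μ := MeasureTheory.volume) (by norm_num : (0:ℝ) ≤ 1)
      (hgc.abs.intervalIntegrable _ _)
      (((hc.pow 2).add (hd.pow 2)).intervalIntegrable _ _)
      (fun x hx => by
        simp only [hg, Pi.add_apply, Pi.pow_apply]
        rw [abs_le]
        constructor <;> nlinarith [sq_nonneg (v x + deriv v x), sq_nonneg (v x - deriv v x)])
    have h' := intervalIntegral.integral_add (μ := MeasureTheory.volume)
      ((hc.pow 2).intervalIntegrable (0:ℝ) 1) ((hd.pow 2).intervalIntegrable (0:ℝ) 1)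
    simp only [Pi.add_apply, Pi.pow_apply] at h h'
    linarith [h, h']
  have hD : (0:ℝ) ≤ ∫ x in (0:ℝ)..1, deriv v x ^ 2 :=
    intervalIntegral.integral_nonneg (by norm_num) (fun x _ => sq_nonneg _)
  have hle : ∫ x in x₀..t, g x ≤ |∫ x in x₀..t, g x| := le_abs_self _
  linarith [habs1.trans (habs2.trans_eq habs3)]

set_option maxHeartbeats 1000000 in
/-- Lemma 4.4: equivalence of the Lyapunov functional and the energy. -/
theorem stmt_13 (p α β lam lam₀ lam₁ δ : ℝ) (hp : 2 < p) (hα : 2 < α) (hβ : 2 < β)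
    (hlam : 0 < lam) (hlam₀ : 0 < lam₀) (hlam₁ : 0 < lam₁)
    (hδ : 0 < δ) (hδ' : δ < (min p (min α β) - 2) / min p (min α β))
    (v w : ℝ → ℝ) (hv : ContDiff ℝ 1 v) (hw : Continuous w)
    (hI : 0 ≤ ((∫ x in (0:ℝ)..1, (v x) ^ 2) + ∫ x in (0:ℝ)..1, (deriv v x) ^ 2) -
        (∫ x in (0:ℝ)..1, |v x| ^ p) - |v 0| ^ α - |v 1| ^ β) :
    (let q := min p (min α β);
     let nsq := (∫ x in (0:ℝ)..1, (v x) ^ 2) + ∫ x in (0:ℝ)..1, (deriv v x) ^ 2;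
     let E := (1 / 2) * (∫ x in (0:ℝ)..1, (w x) ^ 2) + (1 / 2) * nsq -
       (1 / p) * (∫ x in (0:ℝ)..1, |v x| ^ p) - (1 / α) * |v 0| ^ α - (1 / β) * |v 1| ^ β;
     let ψ := (∫ x in (0:ℝ)..1, v x * w x) + (lam / 2) * (∫ x in (0:ℝ)..1, (v x) ^ 2) +
       (lam₀ / 2) * |v 0| ^ 2 + (lam₁ / 2) * |v 1| ^ 2;
     let β₁ := min (1 - δ) ((q - 2) / q - δ);
     let β₂ := 1 + δ + (2 * q / (q - 2)) * (1 / 2 + δ * ((1 + lam) / 2 + lam₀ + lam₁));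
     0 < β₁ ∧ β₁ * E ≤ E + δ * ψ ∧ E + δ * ψ ≤ β₂ * E) := by
  intro q nsq E ψ β₁ β₂
  have hcv : Continuous v := hv.continuous
  set V : ℝ := ∫ x in (0:ℝ)..1, (v x) ^ 2 with hVdef
  set D : ℝ := ∫ x in (0:ℝ)..1, (deriv v x) ^ 2 with hDdef
  set W : ℝ := ∫ x in (0:ℝ)..1, (w x) ^ 2 with hWdef
  set P : ℝ := ∫ x in (0:ℝ)..1, |v x| ^ p with hPdef
  set S : ℝ := ∫ x in (0:ℝ)..1, v x * w x with hSdef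
  set A : ℝ := |v 0| ^ α with hAdef
  set B : ℝ := |v 1| ^ β with hBdef
  have hq2 : 2 < q := lt_min hp (lt_min hα hβ)
  have hq0 : 0 < q := by linarith
  have hqp : q ≤ p := min_le_left _ _
  have hqα : q ≤ α := le_trans (min_le_right _ _) (min_le_left _ _)
  have hqβ : q ≤ β := le_trans (min_le_right _ _) (min_le_right _ _)
  set r : ℝ := (q - 2) / q with hrdef
  have hEeq : E = (1/2) * W + (1/2) * (V + D) - (1/p) * P - (1/α) * A - (1/β) * B := rfl
  have hψeq : ψ = S + (lam/2) * V + (lam₀/2) * |v 0| ^ 2 + (lam₁/2) * |v 1| ^ 2 := rfl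
  have hb1a : β₁ ≤ 1 - δ := min_le_left _ _
  have hb1b : β₁ ≤ r - δ := min_le_right _ _
  have hb1min : β₁ = min (1 - δ) (r - δ) := rfl
  set C : ℝ := (1 + lam) / 2 + lam₀ + lam₁ with hCdef
  set K : ℝ := 2 * q / (q - 2) with hKdef
  have hb2 : β₂ = 1 + δ + K * (1/2 + δ * C) := rfl
  clear_value q nsq E ψ β₁ β₂
  -- basic positivity
  have hV : 0 ≤ V := intervalIntegral.integral_nonneg (by norm_num) (fun x _ => sq_nonneg _)
  have hD : 0 ≤ D := intervalIntegral.integral_nonneg (by norm_num) (fun x _ => sq_nonneg _)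
  have hW : 0 ≤ W := intervalIntegral.integral_nonneg (by norm_num) (fun x _ => sq_nonneg _)
  have hP : 0 ≤ P := intervalIntegral.integral_nonneg (by norm_num)
    (fun x _ => Real.rpow_nonneg (abs_nonneg _) _)
  have hA : 0 ≤ A := Real.rpow_nonneg (abs_nonneg _) _
  have hB : 0 ≤ B := Real.rpow_nonneg (abs_nonneg _) _
  have hr0 : 0 < r := div_pos (by linarith) hq0
  have hr1 : r < 1 := by rw [hrdef, div_lt_one hq0]; linarith
  have hδr : δ < r := hδ'
  -- Cauchy-Schwarz and traces
  have hS : |S| ≤ (1/2) * (V + W) := aux_cs v w hcv hw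
  have htr0 : v 0 ^ 2 ≤ 2 * (V + D) := aux_trace v hv 0 le_rfl (by norm_num)
  have htr1 : v 1 ^ 2 ≤ 2 * (V + D) := aux_trace v hv 1 (by norm_num) le_rfl
  have hv0 : |v 0| ^ 2 = v 0 ^ 2 := sq_abs _
  have hv1 : |v 1| ^ 2 = v 1 ^ 2 := sq_abs _
  have hI' : P + A + B ≤ V + D := by linarith
  have hPq : (1/p) * P ≤ (1/q) * P :=
    mul_le_mul_of_nonneg_right (one_div_le_one_div_of_le hq0 hqp) hP
  have hAq : (1/α) * A ≤ (1/q) * A :=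
    mul_le_mul_of_nonneg_right (one_div_le_one_div_of_le hq0 hqα) hA
  have hBq : (1/β) * B ≤ (1/q) * B :=
    mul_le_mul_of_nonneg_right (one_div_le_one_div_of_le hq0 hqβ) hB
  have hqne : q ≠ 0 := hq0.ne'
  have hrhalf : r / 2 = 1/2 - 1/q := by
    rw [hrdef, sub_div, div_self hqne]; ring
  have hElow : (1/2) * W + (r/2) * (V + D) ≤ E := by
    have h1 : (1/q) * (P + A + B) ≤ (1/q) * (V + D) :=
      mul_le_mul_of_nonneg_left hI' (by positivity)
    have h2 : (r/2) * (V + D) = (1/2) * (V + D) - (1/q) * (V + D) := by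
      rw [hrhalf]; ring
    have h3 : (1/q) * (P + A + B) = (1/q) * P + (1/q) * A + (1/q) * B := by ring
    rw [hEeq]
    linarith
  have hb1pos : 0 < β₁ := by rw [hb1min]; exact lt_min (by linarith) (by linarith)
  refine ⟨hb1pos, ?_, ?_⟩
  · -- lower bound
    have hψlow : -((1/2) * (V + W)) ≤ ψ := by
      rw [hψeq]
      have h0 : 0 ≤ (lam₀/2) * |v 0| ^ 2 := by positivity
      have h1 : 0 ≤ (lam₁/2) * |v 1| ^ 2 := by positivity
      have h2 : 0 ≤ (lam/2) * V := by positivity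
      have := (abs_le.mp hS).1
      linarith
    have hkey : δ ≤ (1 - β₁) * r := by
      have h1 : 0 ≤ (r - δ) * (1 - r) := mul_nonneg (by linarith) (by linarith)
      have h2 : (1 - r + δ) * r ≤ (1 - β₁) * r :=
        mul_le_mul_of_nonneg_right (by linarith) hr0.le
      have h1' : (r - δ) * (1 - r) = r - r*r - δ + δ*r := by ring
      have h2' : (1 - r + δ) * r = r - r*r + δ*r := by ring
      linarith only [h1, h2, h1', h2']
    have h1b : δ ≤ 1 - β₁ := by linarith
    have hE1 : (1 - β₁) * ((1/2) * W + (r/2) * (V + D)) ≤ (1 - β₁) * E :=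
      mul_le_mul_of_nonneg_left hElow (by linarith)
    have hE2 : δ * (-((1/2) * (V + W))) ≤ δ * ψ :=
      mul_le_mul_of_nonneg_left hψlow hδ.le
    have hW1 : δ * ((1/2) * W) ≤ (1 - β₁) * ((1/2) * W) :=
      mul_le_mul_of_nonneg_right h1b (by positivity)
    have hW2 : δ * ((1/2) * (V + D)) ≤ (1 - β₁) * ((r/2) * (V + D)) := by
      have h := mul_le_mul_of_nonneg_right hkey
        (by positivity : (0:ℝ) ≤ (1/2) * (V + D))
      calc δ * ((1/2) * (V + D)) = δ * ((1/2) * (V + D)) := rfl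
        _ ≤ (1 - β₁) * r * ((1/2) * (V + D)) := h
        _ = (1 - β₁) * ((r/2) * (V + D)) := by ring
    have hδD : 0 ≤ δ * D := mul_nonneg hδ.le hD
    linarith [hE1, hE2, hW1, hW2, hδD]
  · -- upper bound
    have hK0 : 0 < K := div_pos (by linarith) (by linarith)
    have hKr : K * (r/2) = 1 := by
      have h2q : (0:ℝ) < q - 2 := by linarith
      rw [hKdef, hrdef, div_div, div_mul_div_comm,
        div_eq_one_iff_eq (mul_pos h2q (by linarith : (0:ℝ) < q * 2)).ne']
      ring
    have hC0 : 0 < C := by rw [hCdef]; linarith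
    have hψup : ψ ≤ (1/2) * W + C * (V + D) := by
      rw [hψeq, hv0, hv1]
      have h0 : (lam₀/2) * v 0 ^ 2 ≤ (lam₀/2) * (2 * (V + D)) :=
        mul_le_mul_of_nonneg_left htr0 (by positivity)
      have h1 : (lam₁/2) * v 1 ^ 2 ≤ (lam₁/2) * (2 * (V + D)) :=
        mul_le_mul_of_nonneg_left htr1 (by positivity)
      have h2 : (lam/2) * V ≤ (lam/2) * (V + D) :=
        mul_le_mul_of_nonneg_left (by linarith) (by positivity)
      have hS1 := (abs_le.mp hS).2
      have hC : C * (V + D) = (1/2) * (V + D) + (lam/2) * (V + D) +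
          lam₀ * (V + D) + lam₁ * (V + D) := by rw [hCdef]; ring
      have hh0 : (lam₀/2) * (2 * (V + D)) = lam₀ * (V + D) := by ring
      have hh1 : (lam₁/2) * (2 * (V + D)) = lam₁ * (V + D) := by ring
      have hVD : 0 ≤ (1/2) * D := by positivity
      linarith
    have hrVD : 0 ≤ (r/2) * (V + D) := by positivity
    have hEW : (1/2) * W ≤ E := by linarith
    have hd1 : δ * ψ ≤ δ * ((1/2) * W + C * (V + D)) :=
      mul_le_mul_of_nonneg_left hψup hδ.le
    have hd2 : δ * ((1/2) * W) ≤ δ * E := mul_le_mul_of_nonneg_left hEW hδ.le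
    have hfac : 0 ≤ K * (1/2 + δ * C) := by positivity
    have hd3 : K * (1/2 + δ * C) * ((1/2) * W + (r/2) * (V + D)) ≤ K * (1/2 + δ * C) * E :=
      mul_le_mul_of_nonneg_left hElow hfac
    have hd4 : K * (1/2 + δ * C) * ((r/2) * (V + D)) = (1/2 + δ * C) * (V + D) := by
      have h : K * (1/2 + δ * C) * ((r/2) * (V + D)) =
          (K * (r/2)) * ((1/2 + δ * C) * (V + D)) := by ring
      rw [h, hKr, one_mul]
    have hd5 : 0 ≤ K * (1/2 + δ * C) * ((1/2) * W) :=
      mul_nonneg hfac (by positivity)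
    have hd6 : δ * (C * (V + D)) ≤ (1/2 + δ * C) * (V + D) := by
      have : (1/2 + δ * C) * (V + D) - δ * (C * (V + D)) = (1/2) * (V + D) := by ring
      linarith [mul_nonneg (by norm_num : (0:ℝ) ≤ (1:ℝ)/2) (by linarith : (0:ℝ) ≤ V + D)]
    rw [hb2]
    have hd7 : δ * ((1/2) * W + C * (V + D)) = δ * ((1/2) * W) + δ * (C * (V + D)) := by ring
    linarith [hd1, hd2, hd3, hd4, hd5, hd6]
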